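/- (Theorem 2) Let k ≥ 1 and for each i ∈ Fin k let (B_i, Ω_i) be a partial matrix over a field F with finite row index m_i and finite column index n_i. Let M be the block partial matrix on rows Σ i, m_i and columns Σ i, n_i whose (i, i) diagonal block is B_i (with known positions Ω_i) and whose off-diagonal blocks are entirely unknown. Then mr(M) = max over i ∈ Fin k of mr(B_i, Ω_i). -/

import Mathlib

open Module Matrix

/-- `N` is a completion of the partial matrix `(M, Ω)`: it agrees with `M`
on all known positions `Ω`. -/
def IsCompletion {F m n : Type*} [Field F] (M : Matrix m n F) (Ω : Set (m × n))
    (N : Matrix m n F) : Prop :=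
  ∀ p ∈ Ω, N p.1 p.2 = M p.1 p.2

/-- The minimum rank of the partial matrix `(M, Ω)`: the minimum of the ranks of
its completions. -/
noncomputable def mr {F m n : Type*} [Field F] [Fintype m] [Fintype n]
    (M : Matrix m n F) (Ω : Set (m × n)) : ℕ :=
  sInf {r | ∃ N : Matrix m n F, IsCompletion M Ω N ∧ N.rank = r}

theorem exists_completion {F m n : Type*} [Field F] (M : Matrix m n F) (Ω : Set (m × n)) :
    ∃ N, IsCompletion M Ω N := by
  classical
  refine ⟨fun x y => if h : (x, y) ∈ Ω then M x y else 0, ?_⟩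
  rintro ⟨a, b⟩ hp
  exact dif_pos hp

theorem mr_set_nonempty {F m n : Type*} [Field F] [Fintype m] [Fintype n]
    (M : Matrix m n F) (Ω : Set (m × n)) :
    {r | ∃ N : Matrix m n F, IsCompletion M Ω N ∧ N.rank = r}.Nonempty := by
  obtain ⟨N, hN⟩ := exists_completion M Ω
  exact ⟨N.rank, N, hN, rfl⟩

theorem mr_le_rank {F m n : Type*} [Field F] [Fintype m] [Fintype n]
    {M : Matrix m n F} {Ω : Set (m × n)} {N : Matrix m n F} (hN : IsCompletion M Ω N) :
    mr M Ω ≤ N.rank :=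
  Nat.sInf_le ⟨N, hN, rfl⟩

theorem exists_min_completion {F m n : Type*} [Field F] [Fintype m] [Fintype n]
    (M : Matrix m n F) (Ω : Set (m × n)) :
    ∃ N : Matrix m n F, IsCompletion M Ω N ∧ N.rank = mr M Ω :=
  Nat.sInf_mem (mr_set_nonempty M Ω)

/-- Rank of a submatrix (arbitrary row map, arbitrary column map) is at most the rank. -/
theorem rank_submatrix_le_general {F l m n o : Type*} [Field F] [Fintype n] [Fintype o]
    (A : Matrix m n F) (f : l → m) (g : o → n) :
    (A.submatrix f g).rank ≤ A.rank := by
  rw [Matrix.rank_eq_finrank_span_cols, Matrix.rank_eq_finrank_span_cols]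
  haveI hfin : Module.Finite F (Submodule.span F (Set.range Aᵀ)) :=
    Module.Finite.span_of_finite F (Set.finite_range _)
  haveI : Module.Finite F
      (Submodule.map (LinearMap.funLeft F F f) (Submodule.span F (Set.range Aᵀ))) :=
    Module.Finite.map _ _
  have hsub : Submodule.span F (Set.range (A.submatrix f g)ᵀ) ≤
      Submodule.map (LinearMap.funLeft F F f) (Submodule.span F (Set.range Aᵀ)) := by
    rw [Submodule.map_span]
    refine Submodule.span_mono ?_
    rintro _ ⟨o, rfl⟩
    exact ⟨Aᵀ (g o), ⟨g o, rfl⟩, rfl⟩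
  calc finrank F (Submodule.span F (Set.range (A.submatrix f g)ᵀ))
      ≤ finrank F (Submodule.map (LinearMap.funLeft F F f) (Submodule.span F (Set.range Aᵀ))) :=
        Submodule.finrank_mono hsub
    _ ≤ finrank F (Submodule.span F (Set.range Aᵀ)) := Submodule.finrank_map_le _ _

/-- Extension by zero, `(Fin d → F) →ₗ (Fin r → F)` for `d ≤ r`. -/
noncomputable def extZero (F : Type*) [Field F] {d r : ℕ} (h : d ≤ r) :
    (Fin d → F) →ₗ[F] (Fin r → F) where
  toFun x j := if hj : (j : ℕ) < d then x ⟨j, hj⟩ else 0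
  map_add' x y := by ext j; by_cases hj : (j : ℕ) < d <;> simp [hj]
  map_smul' c x := by ext j; by_cases hj : (j : ℕ) < d <;> simp [hj]

theorem funLeft_castLE_extZero (F : Type*) [Field F] {d r : ℕ} (h : d ≤ r) (x : Fin d → F) :
    LinearMap.funLeft F F (Fin.castLE h) (extZero F h x) = x := by
  ext i
  simp [extZero, LinearMap.funLeft, i.isLt]

/-- Any matrix of rank at most `r` factors through `Fin r`. -/
theorem exists_factorization {F m n : Type*} [Field F] [Fintype m] [Fintype n]
    (A : Matrix m n F) (r : ℕ) (hr : A.rank ≤ r) :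
    ∃ (P : Matrix m (Fin r) F) (Q : Matrix (Fin r) n F), A = P * Q := by
  classical
  set L := A.mulVecLin with hL
  set W := LinearMap.range L with hW
  have hd : finrank F W ≤ r := hr
  let b : Basis (Fin (finrank F W)) F W := finBasis F W
  let u : (n → F) →ₗ[F] (Fin r → F) :=
    extZero F hd ∘ₗ b.equivFun.toLinearMap ∘ₗ L.rangeRestrict
  let v : (Fin r → F) →ₗ[F] (m → F) :=
    W.subtype ∘ₗ b.equivFun.symm.toLinearMap ∘ₗ LinearMap.funLeft F F (Fin.castLE hd)
  have hvu : v ∘ₗ u = L := by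
    refine LinearMap.ext fun x => ?_
    simp only [LinearMap.comp_apply, u, v]
    rw [funLeft_castLE_extZero]
    simp only [LinearEquiv.coe_coe, LinearEquiv.symm_apply_apply]
    rfl
  refine ⟨LinearMap.toMatrix' v, LinearMap.toMatrix' u, ?_⟩
  rw [← LinearMap.toMatrix'_comp, hvu, hL, ← Matrix.toLin'_apply', LinearMap.toMatrix'_toLin']

theorem mr_udiag {F : Type*} [Field F] {k : ℕ} (hk : 1 ≤ k)
    {mI nI : Fin k → Type*} [∀ i, Fintype (mI i)] [∀ i, Fintype (nI i)]
    (B : ∀ i, Matrix (mI i) (nI i) F) (ΩB : ∀ i, Set (mI i × nI i))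
    (M : Matrix (Σ i, mI i) (Σ i, nI i) F) (ΩM : Set ((Σ i, mI i) × (Σ i, nI i)))
    (hM : ∀ (i : Fin k) (r : mI i) (c : nI i), M ⟨i, r⟩ ⟨i, c⟩ = B i r c)
    (hΩ : ∀ (p : Σ i, mI i) (q : Σ i, nI i),
      (p, q) ∈ ΩM ↔ ∃ h : p.1 = q.1, (h ▸ p.2, q.2) ∈ ΩB q.1) :
    mr M ΩM = Finset.univ.sup (fun i : Fin k => mr (B i) (ΩB i)) := by
  classical
  set r := Finset.univ.sup (fun i : Fin k => mr (B i) (ΩB i)) with hrdef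
  apply le_antisymm
  · choose N hN hNrank using fun i => exists_min_completion (B i) (ΩB i)
    have hNr : ∀ i, (N i).rank ≤ r := fun i =>
      (hNrank i).le.trans ((Finset.le_sup (f := fun i : Fin k => mr (B i) (ΩB i))
        (Finset.mem_univ i)).trans hrdef.ge)
    choose P Q hPQ using fun i => exists_factorization (N i) r (hNr i)
    set P' : Matrix (Σ i, mI i) (Fin r) F := fun p s => P p.1 p.2 s with hP'
    set Q' : Matrix (Fin r) (Σ i, nI i) F := fun s q => Q q.1 s q.2 with hQ'
    have key : IsCompletion M ΩM (P' * Q') := by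
      rintro ⟨⟨i, x⟩, ⟨j, y⟩⟩ hpq
      obtain ⟨h, hmem⟩ := (hΩ _ _).1 hpq
      dsimp only at h
      subst h
      have h1 : (P' * Q') ⟨i, x⟩ ⟨i, y⟩ = (P i * Q i) x y := by
        exact Matrix.mul_apply.trans Matrix.mul_apply.symm
      dsimp only
      rw [h1, ← hPQ i, hM]
      exact hN i (x, y) hmem
    calc mr M ΩM ≤ (P' * Q').rank := mr_le_rank key
      _ ≤ P'.rank := Matrix.rank_mul_le_left _ _
      _ ≤ Fintype.card (Fin r) := Matrix.rank_le_card_width P'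
      _ = r := Fintype.card_fin r
  · obtain ⟨N, hN, hrank⟩ := exists_min_completion M ΩM
    refine Finset.sup_le fun i _ => ?_
    have comp_i : IsCompletion (B i) (ΩB i) (N.submatrix (Sigma.mk i) (Sigma.mk i)) := by
      rintro ⟨x, y⟩ hxy
      have hm : ((⟨i, x⟩ : Σ i, mI i), (⟨i, y⟩ : Σ i, nI i)) ∈ ΩM := (hΩ _ _).2 ⟨rfl, hxy⟩
      have := hN _ hm
      simpa [Matrix.submatrix, hM] using this
    calc mr (B i) (ΩB i) ≤ (N.submatrix (Sigma.mk i) (Sigma.mk i)).rank := mr_le_rank comp_i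
      _ ≤ N.rank := rank_submatrix_le_general N _ _
      _ = mr M ΩM := hrank
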